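/- Let $\sigma = (x_1, \dots, x_n)$ be a permutation of $[n]$ that properly separates both pairs $(A_i, B_i)$ and $(A_j, B_j)$ of subsets of $[n]$, where $|A_i \cap B_i| \le t$, $|A_j \cap B_j| \le t$, $|A_i \cap B_j| \ge t$, $|A_j \cap B_i| \ge t$ for some $t \ge 1$. Then $A_i \cap B_j = A_i \cap B_i = A_j \cap B_i = A_j \cap B_j$ and all have size exactly $t$. -/

import Mathlib

/-- A permutation `σ` of `[n]` (where `x_s = σ s`) properly separates the pair `(A, B)`. -/
def ProperlySeparates {n : ℕ} (σ : Equiv.Perm (Fin n)) (A B : Finset (Fin n)) : Prop :=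
  (∀ s l : Fin n, σ s ∈ A \ B → σ l ∈ B → s < l) ∧
  (∀ s l : Fin n, σ s ∈ A → σ l ∈ B \ A → s < l)

lemma sep1 {n : ℕ} {σ : Equiv.Perm (Fin n)} {A B : Finset (Fin n)}
    (h : ProperlySeparates σ A B) {x y : Fin n}
    (hxA : x ∈ A) (hxB : x ∉ B) (hyB : y ∈ B) : σ.symm x < σ.symm y := by
  have := h.1 (σ.symm x) (σ.symm y)
  simp only [Equiv.apply_symm_apply, Finset.mem_sdiff] at this
  exact this ⟨hxA, hxB⟩ hyB

lemma sep2 {n : ℕ} {σ : Equiv.Perm (Fin n)} {A B : Finset (Fin n)}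
    (h : ProperlySeparates σ A B) {x y : Fin n}
    (hxA : x ∈ A) (hyB : y ∈ B) (hyA : y ∉ A) : σ.symm x < σ.symm y := by
  have := h.2 (σ.symm x) (σ.symm y)
  simp only [Equiv.apply_symm_apply, Finset.mem_sdiff] at this
  exact this hxA ⟨hyB, hyA⟩

theorem stmt_18 (n t : ℕ) (ht : 1 ≤ t) (σ : Equiv.Perm (Fin n))
    (Ai Bi Aj Bj : Finset (Fin n))
    (hsi : ProperlySeparates σ Ai Bi) (hsj : ProperlySeparates σ Aj Bj)
    (hai : (Ai ∩ Bi).card ≤ t) (haj : (Aj ∩ Bj).card ≤ t)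
    (hbi : t ≤ (Ai ∩ Bj).card) (hbj : t ≤ (Aj ∩ Bi).card) :
    Ai ∩ Bj = Ai ∩ Bi ∧ Ai ∩ Bi = Aj ∩ Bi ∧ Aj ∩ Bi = Aj ∩ Bj ∧
      (Ai ∩ Bi).card = t := by
  set S := (Ai ∩ Bj) \ Bi with hSdef
  set T := (Aj ∩ Bi) \ Bj with hTdef
  have hneji : (Aj ∩ Bi).Nonempty := Finset.card_pos.mp (le_trans ht hbj)
  have hneij : (Ai ∩ Bj).Nonempty := Finset.card_pos.mp (le_trans ht hbi)
  -- S ⊆ Aj ∩ Bj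
  have hS : S ⊆ Aj ∩ Bj := by
    intro x hx
    simp only [hSdef, Finset.mem_sdiff, Finset.mem_inter] at hx
    obtain ⟨⟨hxAi, hxBj⟩, hxBi⟩ := hx
    obtain ⟨y, hy⟩ := hneji
    simp only [Finset.mem_inter] at hy
    by_contra hc
    have hxAj : x ∉ Aj := by
      intro hxAj
      exact hc (Finset.mem_inter.mpr ⟨hxAj, hxBj⟩)
    have h1 : σ.symm x < σ.symm y := sep1 hsi hxAi hxBi hy.2
    have h2 : σ.symm y < σ.symm x := sep2 hsj hy.1 hxBj hxAj
    exact absurd h1 (not_lt.mpr h2.le)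
  -- T ⊆ Ai ∩ Bi
  have hT : T ⊆ Ai ∩ Bi := by
    intro y hy
    simp only [hTdef, Finset.mem_sdiff, Finset.mem_inter] at hy
    obtain ⟨⟨hyAj, hyBi⟩, hyBj⟩ := hy
    obtain ⟨x, hx⟩ := hneij
    simp only [Finset.mem_inter] at hx
    by_contra hc
    have hyAi : y ∉ Ai := by
      intro hyAi
      exact hc (Finset.mem_inter.mpr ⟨hyAi, hyBi⟩)
    have h1 : σ.symm y < σ.symm x := sep1 hsj hyAj hyBj hx.2
    have h2 : σ.symm x < σ.symm y := sep2 hsi hx.1 hyBi hyAi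
    exact absurd h1 (not_lt.mpr h2.le)
  -- S and T cannot both be nonempty
  have hST : S = ∅ ∨ T = ∅ := by
    by_contra hc
    push_neg at hc
    obtain ⟨x, hx⟩ := hc.1
    obtain ⟨y, hy⟩ := hc.2
    simp only [hSdef, hTdef, Finset.mem_sdiff, Finset.mem_inter] at hx hy
    have h1 : σ.symm x < σ.symm y := sep1 hsi hx.1.1 hx.2 hy.1.2
    have h2 : σ.symm y < σ.symm x := sep1 hsj hy.1.1 hy.2 hx.1.2
    exact absurd h1 (not_lt.mpr h2.le)
  -- counting
  have hcard1 : ((Ai ∩ Bj) ∩ Bi).card + S.card = (Ai ∩ Bj).card :=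
    Finset.card_inter_add_card_sdiff _ _
  have hcard2 : ((Aj ∩ Bi) ∩ Bj).card + T.card = (Aj ∩ Bi).card :=
    Finset.card_inter_add_card_sdiff _ _
  -- T ∪ ((Ai ∩ Bj) ∩ Bi) ⊆ Ai ∩ Bi, disjoint
  have hdisj1 : Disjoint T ((Ai ∩ Bj) ∩ Bi) := by
    apply Finset.disjoint_left.mpr
    intro a ha hb
    simp only [hTdef, Finset.mem_sdiff] at ha
    simp only [Finset.mem_inter] at hb
    exact ha.2 hb.1.2
  have hdisj2 : Disjoint S ((Aj ∩ Bi) ∩ Bj) := by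
    apply Finset.disjoint_left.mpr
    intro a ha hb
    simp only [hSdef, Finset.mem_sdiff] at ha
    simp only [Finset.mem_inter] at hb
    exact ha.2 hb.1.2
  have hsub1 : T ∪ ((Ai ∩ Bj) ∩ Bi) ⊆ Ai ∩ Bi := by
    apply Finset.union_subset hT
    intro a ha
    simp only [Finset.mem_inter] at ha ⊢
    exact ⟨ha.1.1, ha.2⟩
  have hsub2 : S ∪ ((Aj ∩ Bi) ∩ Bj) ⊆ Aj ∩ Bj := by
    apply Finset.union_subset hS
    intro a ha
    simp only [Finset.mem_inter] at ha ⊢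
    exact ⟨ha.1.1, ha.2⟩
  have hle1 : T.card + ((Ai ∩ Bj) ∩ Bi).card ≤ t := by
    calc T.card + ((Ai ∩ Bj) ∩ Bi).card = (T ∪ ((Ai ∩ Bj) ∩ Bi)).card :=
          (Finset.card_union_of_disjoint hdisj1).symm
      _ ≤ (Ai ∩ Bi).card := Finset.card_le_card hsub1
      _ ≤ t := hai
  have hle2 : S.card + ((Aj ∩ Bi) ∩ Bj).card ≤ t := by
    calc S.card + ((Aj ∩ Bi) ∩ Bj).card = (S ∪ ((Aj ∩ Bi) ∩ Bj)).card :=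
          (Finset.card_union_of_disjoint hdisj2).symm
      _ ≤ (Aj ∩ Bj).card := Finset.card_le_card hsub2
      _ ≤ t := haj
  have hSTcard : S.card = 0 ∨ T.card = 0 := by
    rcases hST with h | h <;> simp [h]
  have hS0 : S.card = 0 ∧ T.card = 0 ∧ ((Ai ∩ Bj) ∩ Bi).card = t
      ∧ ((Aj ∩ Bi) ∩ Bj).card = t := by omega
  -- Ai ∩ Bj = Ai ∩ Bi
  have hSempty : S = ∅ := Finset.card_eq_zero.mp hS0.1
  have hTempty : T = ∅ := Finset.card_eq_zero.mp hS0.2.1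
  have hsub_ij : Ai ∩ Bj ⊆ Ai ∩ Bi := by
    intro a ha
    have haBi : a ∈ Bi := by
      by_contra hc
      have : a ∈ S := by
        simp only [hSdef, Finset.mem_sdiff]
        exact ⟨ha, hc⟩
      simp [hSempty] at this
    exact Finset.mem_inter.mpr ⟨(Finset.mem_inter.mp ha).1, haBi⟩
  have heq1 : Ai ∩ Bj = Ai ∩ Bi :=
    Finset.eq_of_subset_of_card_le hsub_ij (le_trans hai hbi)
  have hsub_ji : Aj ∩ Bi ⊆ Aj ∩ Bj := by
    intro a ha
    have haBj : a ∈ Bj := by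
      by_contra hc
      have : a ∈ T := by
        simp only [hTdef, Finset.mem_sdiff]
        exact ⟨ha, hc⟩
      simp [hTempty] at this
    exact Finset.mem_inter.mpr ⟨(Finset.mem_inter.mp ha).1, haBj⟩
  have heq3 : Aj ∩ Bi = Aj ∩ Bj :=
    Finset.eq_of_subset_of_card_le hsub_ji (le_trans haj hbj)
  have hcii : (Ai ∩ Bi).card = t := le_antisymm hai (heq1 ▸ hbi)
  have hcjj : (Aj ∩ Bi).card = t := le_antisymm (heq3 ▸ haj) hbj
  -- middle equality: Ai ∩ Bi ⊆ Aj ∩ Bi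
  have hmid_sub : Ai ∩ Bi ⊆ Aj ∩ Bi := by
    intro x hx
    have hxAi := (Finset.mem_inter.mp hx).1
    have hxBi := (Finset.mem_inter.mp hx).2
    have hxBj : x ∈ Bj := (Finset.mem_inter.mp (heq1 ▸ hx)).2
    by_contra hc
    have hxAj : x ∉ Aj := fun h => hc (Finset.mem_inter.mpr ⟨h, hxBi⟩)
    -- then Aj ∩ Bi ⊆ Ai ∩ Bi
    have hsub : Aj ∩ Bi ⊆ Ai ∩ Bi := by
      intro y hy
      have hyAj := (Finset.mem_inter.mp hy).1
      have hyBi := (Finset.mem_inter.mp hy).2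
      have hyAi : y ∈ Ai := by
        by_contra hyAi
        have h1 : σ.symm x < σ.symm y := sep2 hsi hxAi hyBi hyAi
        have h2 : σ.symm y < σ.symm x := sep2 hsj hyAj hxBj hxAj
        exact absurd h1 (not_lt.mpr h2.le)
      exact Finset.mem_inter.mpr ⟨hyAi, hyBi⟩
    have heq : Aj ∩ Bi = Ai ∩ Bi :=
      Finset.eq_of_subset_of_card_le hsub (by omega)
    exact hxAj (Finset.mem_inter.mp (heq ▸ hx)).1
  have heq2 : Ai ∩ Bi = Aj ∩ Bi :=
    Finset.eq_of_subset_of_card_le hmid_sub (by omega)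
  exact ⟨heq1, heq2, heq3, hcii⟩
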